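/- There exist a recursively enumerable set I ⊆ ℕ and a family R : ℕ → ℕ → ℕ → Prop such that for every i ∈ I, R i is an equivalence relation on ℕ, the predicate fun t : ℕ × ℕ × ℕ => R t.1 t.2.1 t.2.2 is r.e., and yet the meet relation relating x and y iff R i x y holds for every i ∈ I (which is an equivalence relation) is not recursively enumerable: the predicate fun p : ℕ × ℕ => ∀ i ∈ I, R i p.1 p.2 is not r.e. -/

import Mathlib

/-- A predicate is recursively enumerable (r.e.); `RePred` is Mathlib's name for it. -/
abbrev REPred' {α : Type} [Primcodable α] (p : α → Prop) : Prop := REPred p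

section Aux
open Nat.Partrec Nat.Partrec.Code


/-- witness: stage `i` computation of code `n` on input `0` halts. -/
def wit (n i : ℕ) : Bool := (evaln i (Denumerable.ofNat Code n) 0).isSome

lemma wit_primrec : Primrec fun p : ℕ × ℕ => wit p.1 p.2 := by
  have h : Primrec fun p : ℕ × ℕ => evaln p.2 (Denumerable.ofNat Code p.1) 0 :=
    primrec_evaln.comp <| ((Primrec.snd.pair ((Primrec.ofNat Code).comp Primrec.fst)).pair
      (Primrec.const 0))
  exact (Primrec.option_isSome.comp h)

def Rrel (i x y : ℕ) : Prop :=
  x = y ∨ (y = x + 1 ∧ x % 2 = 1 ∧ wit (x / 2) i = false)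
    ∨ (x = y + 1 ∧ y % 2 = 1 ∧ wit (y / 2) i = false)

lemma Rrel_equiv (i : ℕ) : Equivalence (Rrel i) := by
  constructor
  · intro x; left; rfl
  · intro x y h; rcases h with h | h | h
    · left; omega
    · right; right; exact h
    · right; left; exact h
  · intro x y z hxy hyz
    rcases hxy with h | h | h <;> rcases hyz with h' | h' | h' <;>
      simp_all [Rrel] <;> omega

lemma meet_iff (n : ℕ) : (∀ i, Rrel i (2 * n + 1) (2 * n + 2)) ↔ ¬(eval (Denumerable.ofNat Code n) 0).Dom := by
  constructor
  · intro h hd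
    obtain ⟨x, hx⟩ := Part.dom_iff_mem.mp hd
    obtain ⟨k, hk⟩ := evaln_complete.mp hx
    rcases h k with h' | h' | h'
    · omega
    · have he : (2 * n + 1) / 2 = n := by omega
      rw [he] at h'
      have : (evaln k (Denumerable.ofNat Code n) 0).isSome := Option.isSome_iff_exists.mpr ⟨x, hk⟩
      simp_all [wit]
    · omega
  · intro hd i
    right; left
    refine ⟨rfl, by omega, ?_⟩
    have : (2 * n + 1) / 2 = n := by omega
    rw [this]
    by_contra h
    simp only [Bool.not_eq_false, wit, Option.isSome_iff_exists] at h
    obtain ⟨x, hx⟩ := h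
    exact hd (Part.dom_iff_mem.mpr ⟨x, evaln_complete.mpr ⟨i, hx⟩⟩)

lemma Rrel_computable : ComputablePred fun t : ℕ × ℕ × ℕ => Rrel t.1 t.2.1 t.2.2 := by
  have hf : Primrec fun t : ℕ × ℕ × ℕ =>
      (decide (t.2.1 = t.2.2) ||
        (decide (t.2.2 = t.2.1 + 1) && decide (t.2.1 % 2 = 1) && !(wit (t.2.1 / 2) t.1)) ||
        (decide (t.2.1 = t.2.2 + 1) && decide (t.2.2 % 2 = 1) && !(wit (t.2.2 / 2) t.1))) := by
    have x : Primrec fun t : ℕ × ℕ × ℕ => t.2.1 := Primrec.fst.comp Primrec.snd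
    have y : Primrec fun t : ℕ × ℕ × ℕ => t.2.2 := Primrec.snd.comp Primrec.snd
    have i : Primrec fun t : ℕ × ℕ × ℕ => t.1 := Primrec.fst
    have e1 : Primrec fun t : ℕ × ℕ × ℕ => decide (t.2.1 = t.2.2) :=
      (Primrec.eq.comp x y).decide
    have e2 : Primrec fun t : ℕ × ℕ × ℕ => decide (t.2.2 = t.2.1 + 1) :=
      (Primrec.eq.comp y (Primrec.succ.comp x)).decide
    have e3 : Primrec fun t : ℕ × ℕ × ℕ => decide (t.2.1 = t.2.2 + 1) :=
      (Primrec.eq.comp x (Primrec.succ.comp y)).decide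
    have m1 : Primrec fun t : ℕ × ℕ × ℕ => decide (t.2.1 % 2 = 1) :=
      (Primrec.eq.comp (Primrec.nat_mod.comp x (Primrec.const 2)) (Primrec.const 1)).decide
    have m2 : Primrec fun t : ℕ × ℕ × ℕ => decide (t.2.2 % 2 = 1) :=
      (Primrec.eq.comp (Primrec.nat_mod.comp y (Primrec.const 2)) (Primrec.const 1)).decide
    have w1 : Primrec fun t : ℕ × ℕ × ℕ => !(wit (t.2.1 / 2) t.1) :=
      Primrec.not.comp (wit_primrec.comp ((Primrec.nat_div.comp x (Primrec.const 2)).pair i))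
    have w2 : Primrec fun t : ℕ × ℕ × ℕ => !(wit (t.2.2 / 2) t.1) :=
      Primrec.not.comp (wit_primrec.comp ((Primrec.nat_div.comp y (Primrec.const 2)).pair i))
    have bor : Primrec₂ or := Primrec.dom_bool₂ _
    have band : Primrec₂ and := Primrec.dom_bool₂ _
    exact bor.comp (bor.comp e1 (band.comp (band.comp e2 m1) w1))
      (band.comp (band.comp e3 m2) w2)
  refine ComputablePred.computable_iff.mpr ⟨_, hf.to_comp, ?_⟩
  funext t
  simp [Rrel, Bool.or_eq_true, Bool.and_eq_true, and_assoc, or_assoc]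

end Aux

/-- There are a recursively enumerable set `I ⊆ ℕ` and a uniformly r.e. family of
equivalence relations `R i` (for `i ∈ I`) whose meet—the relation relating `x` and
`y` iff `R i x y` for every `i ∈ I`—is an equivalence relation that is not
recursively enumerable. -/
theorem re_family_with_non_re_iInf :
    ∃ (I : Set ℕ) (R : ℕ → ℕ → ℕ → Prop),
      REPred' (fun i => i ∈ I) ∧
      (∀ i ∈ I, Equivalence (R i)) ∧
      REPred' (fun t : ℕ × ℕ × ℕ => R t.1 t.2.1 t.2.2) ∧
      Equivalence (fun x y : ℕ => ∀ i ∈ I, R i x y) ∧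
      ¬ REPred' (fun p : ℕ × ℕ => ∀ i ∈ I, R i p.1 p.2) := by
  refine ⟨Set.univ, Rrel, ?_, fun i _ => Rrel_equiv i, Rrel_computable.to_re, ?_, ?_⟩
  · exact (ComputablePred.computable_iff.mpr ⟨fun _ => true, Computable.const _, by simp⟩).to_re
  · constructor
    · intro x i _; exact (Rrel_equiv i).refl x
    · intro x y h i hi; exact (Rrel_equiv i).symm (h i hi)
    · intro x y z h h' i hi; exact (Rrel_equiv i).trans (h i hi) (h' i hi)
  · intro hre
    apply ComputablePred.halting_problem_not_re 0
    have hg : Computable fun c : Nat.Partrec.Code => ((2 * Encodable.encode c + 1, 2 * Encodable.encode c + 2) : ℕ × ℕ) := by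
      have e : Computable fun c : Nat.Partrec.Code => Encodable.encode c := Computable.encode
      exact ((Primrec.succ.comp (Primrec.nat_double.comp Primrec.id)).to_comp.comp e).pair
        ((Primrec.succ.comp (Primrec.succ.comp (Primrec.nat_double.comp Primrec.id))).to_comp.comp e)
    have := Partrec.comp hre hg
    refine this.of_eq fun c => ?_
    have h := meet_iff (Encodable.encode c)
    simp only [Denumerable.ofNat_encode] at h
    have he : (∀ i ∈ (Set.univ : Set ℕ), Rrel i (2 * Encodable.encode c + 1)
        (2 * Encodable.encode c + 2)) = ¬(Nat.Partrec.Code.eval c 0).Dom := propext (by simpa using h)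
    simp only []
    rw [he]
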